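/- Let s₁, …, s_{ℓ+1} be exchangeable real-valued random variables that are almost surely pairwise distinct, and α ∈ [0,1]. Then the probability that |{i : s_i ≥ s_{ℓ+1}}|/(ℓ+1) > 1 − α is at most α + 1/(ℓ+1). -/

import Mathlib

open MeasureTheory ENNReal

private lemma rank_card_comp_perm {n : ℕ} (σ : Equiv.Perm (Fin n)) (x : Fin n → ℝ)
    (i : Fin n) :
    (Finset.univ.filter (fun j => x (σ i) ≤ x (σ j))).card
      = (Finset.univ.filter (fun j => x (σ i) ≤ x j)).card := by
  classical
  apply Finset.card_bij (fun j _ => σ j)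
  · intro a ha
    simp only [Finset.mem_filter, Finset.mem_univ, true_and] at ha ⊢
    exact ha
  · intro a _ b _ hab
    exact σ.injective hab
  · intro b hb
    refine ⟨σ.symm b, ?_, by simp⟩
    simp only [Finset.mem_filter, Finset.mem_univ, true_and] at hb ⊢
    simpa using hb

private lemma rank_mono {n : ℕ} (x : Fin n → ℝ) {i j : Fin n} (hij : x i < x j) :
    (Finset.univ.filter (fun k => x j ≤ x k)).card
      < (Finset.univ.filter (fun k => x i ≤ x k)).card := by
  classical
  apply Finset.card_lt_card
  rw [Finset.ssubset_iff_of_subset]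
  · refine ⟨i, ?_, ?_⟩
    · simp
    · simp only [Finset.mem_filter, Finset.mem_univ, true_and]
      exact not_le.2 hij
  · intro k hk
    simp only [Finset.mem_filter, Finset.mem_univ, true_and] at hk ⊢
    exact hij.le.trans hk

private lemma rank_inj {n : ℕ} (x : Fin n → ℝ)
    (hx : ∀ i j : Fin n, i ≠ j → x i ≠ x j) :
    Function.Injective (fun i : Fin n => (Finset.univ.filter (fun k => x i ≤ x k)).card) := by
  classical
  intro i j hfij
  by_contra hne
  rcases lt_trichotomy (x i) (x j) with h|h|h
  · exact absurd hfij (rank_mono x h).ne'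
  · exact hx i j hne h
  · exact absurd hfij (rank_mono x h).ne

theorem conformal_upper_validity {Ω : Type*} [MeasurableSpace Ω]
    (μ : Measure Ω) [IsProbabilityMeasure μ] (ℓ : ℕ)
    (s : Fin (ℓ + 1) → Ω → ℝ) (hmeas : ∀ i, Measurable (s i))
    (hexch : ∀ σ : Equiv.Perm (Fin (ℓ + 1)),
      Measure.map (fun ω => fun i => s (σ i) ω) μ
        = Measure.map (fun ω => fun i => s i ω) μ)
    (hdist : ∀ᵐ ω ∂μ, ∀ i j : Fin (ℓ + 1), i ≠ j → s i ω ≠ s j ω)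
    (α : ℝ) (hα : α ∈ Set.Icc (0:ℝ) 1) :
    μ {ω | (((Finset.univ.filter
        (fun i : Fin (ℓ + 1) => s (Fin.last ℓ) ω ≤ s i ω)).card : ℝ) / (ℓ + 1)
      > 1 - α)}
      ≤ ENNReal.ofReal (α + 1 / (ℓ + 1)) := by
  classical
  obtain ⟨hα0, hα1⟩ := hα
  have hnpos : (0:ℝ) < (ℓ:ℝ) + 1 := by positivity
  set t : ℝ := (1 - α) * ((ℓ:ℝ) + 1) with htdef
  have ht0 : 0 ≤ t := mul_nonneg (by linarith) hnpos.le
  have htn : t ≤ (ℓ:ℝ) + 1 := by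
    rw [htdef]; nlinarith
  -- rank function on the product space
  have hfmeas : ∀ i : Fin (ℓ + 1), Measurable (fun x : Fin (ℓ + 1) → ℝ =>
      (Finset.univ.filter (fun j => x i ≤ x j)).card) := by
    intro i
    have heq : (fun x : Fin (ℓ + 1) → ℝ =>
        (Finset.univ.filter (fun j => x i ≤ x j)).card)
        = fun x => ∑ j : Fin (ℓ + 1), if x i ≤ x j then 1 else 0 := by
      funext x
      rw [Finset.card_filter]
    rw [heq]
    exact Finset.measurable_sum _ fun j _ =>
      Measurable.ite (measurableSet_le (measurable_pi_apply i) (measurable_pi_apply j))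
        measurable_const measurable_const
  set A : Fin (ℓ + 1) → Set (Fin (ℓ + 1) → ℝ) := fun i =>
    {x | t < ((Finset.univ.filter (fun j => x i ≤ x j)).card : ℝ)} with hAdef
  have hAmeas : ∀ i, MeasurableSet (A i) := by
    intro i
    exact measurableSet_lt measurable_const
      ((measurable_from_top (f := fun k : ℕ => (k:ℝ))).comp (hfmeas i))
  set g : Ω → (Fin (ℓ + 1) → ℝ) := fun ω j => s j ω with hgdef
  have hg : Measurable g := measurable_pi_lambda _ hmeas
  have hms : ∀ i, MeasurableSet (g ⁻¹' A i) := fun i => hg (hAmeas i)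
  -- all ranks identically distributed
  have key : ∀ i, μ (g ⁻¹' A i) = μ (g ⁻¹' A (Fin.last ℓ)) := by
    intro i
    set σ : Equiv.Perm (Fin (ℓ + 1)) := Equiv.swap i (Fin.last ℓ) with hσ
    have hσl : σ (Fin.last ℓ) = i := Equiv.swap_apply_right _ _
    have hgσ : Measurable (fun ω => fun j => s (σ j) ω) :=
      measurable_pi_lambda _ fun j => hmeas (σ j)
    have h1 : g ⁻¹' A i = (fun ω => fun j => s (σ j) ω) ⁻¹' A (Fin.last ℓ) := by
      ext ω
      simp only [Set.mem_preimage, hAdef, Set.mem_setOf_eq, hgdef]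
      have hc : (Finset.univ.filter
            (fun j => s (σ (Fin.last ℓ)) ω ≤ s (σ j) ω)).card
          = (Finset.univ.filter (fun j => s i ω ≤ s j ω)).card := by
        have := rank_card_comp_perm σ (fun j => s j ω) (Fin.last ℓ)
        simpa [hσl] using this
      rw [hc]
    rw [h1, ← Measure.map_apply hgσ (hAmeas _), hexch σ,
      Measure.map_apply hg (hAmeas _)]
  -- the cardinality bound N
  set N : ℕ := ((Finset.Icc 1 (ℓ + 1)).filter (fun k : ℕ => t < (k:ℝ))).card with hNdef
  -- a.e. bound on the sum of indicators
  have hsum : ∑ i : Fin (ℓ + 1), μ (g ⁻¹' A i) ≤ (N : ℝ≥0∞) := by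
    calc ∑ i : Fin (ℓ + 1), μ (g ⁻¹' A i)
        = ∑ i : Fin (ℓ + 1), ∫⁻ ω, (g ⁻¹' A i).indicator (fun _ => (1:ℝ≥0∞)) ω ∂μ := by
          refine Finset.sum_congr rfl fun i _ => ?_
          rw [lintegral_indicator_const (hms i), one_mul]
      _ = ∫⁻ ω, ∑ i : Fin (ℓ + 1), (g ⁻¹' A i).indicator (fun _ => (1:ℝ≥0∞)) ω ∂μ :=
          (lintegral_finset_sum _ fun i _ => (measurable_const.indicator (hms i))).symm
      _ ≤ ∫⁻ _, (N:ℝ≥0∞) ∂μ := by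
          apply lintegral_mono_ae
          filter_upwards [hdist] with ω hω
          have hval : ∀ i : Fin (ℓ + 1), (g ⁻¹' A i).indicator (fun _ => (1:ℝ≥0∞)) ω
              = if t < (((Finset.univ.filter (fun j => s i ω ≤ s j ω)).card : ℕ) : ℝ)
                then 1 else 0 := by
            intro i
            by_cases h : t < (((Finset.univ.filter (fun j => s i ω ≤ s j ω)).card : ℕ) : ℝ)
            · rw [if_pos h, Set.indicator_of_mem]
              exact h
            · rw [if_neg h, Set.indicator_of_notMem]
              exact h
          have hinj : Function.Injective (fun i : Fin (ℓ + 1) =>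
              (Finset.univ.filter (fun j => s i ω ≤ s j ω)).card) := by
            have := rank_inj (fun j => s j ω) (fun i j hij => hω i j hij)
            exact this
          calc ∑ i : Fin (ℓ + 1), (g ⁻¹' A i).indicator (fun _ => (1:ℝ≥0∞)) ω
              = ∑ i : Fin (ℓ + 1),
                  if t < (((Finset.univ.filter (fun j => s i ω ≤ s j ω)).card : ℕ) : ℝ)
                  then (1:ℝ≥0∞) else 0 :=
                Finset.sum_congr rfl fun i _ => hval i
            _ = ((Finset.univ.filter (fun i : Fin (ℓ + 1) =>
                  t < (((Finset.univ.filter (fun j => s i ω ≤ s j ω)).card : ℕ) : ℝ))).card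
                  : ℝ≥0∞) := by
                rw [Finset.sum_boole]
            _ ≤ (N : ℝ≥0∞) := by
                refine Nat.cast_le.2 ?_
                apply Finset.card_le_card_of_injOn
                  (fun i => (Finset.univ.filter (fun j => s i ω ≤ s j ω)).card)
                · intro i hi
                  simp only [Finset.mem_coe, Finset.mem_filter, Finset.mem_univ, true_and] at hi
                  simp only [hNdef, Finset.mem_coe, Finset.mem_filter, Finset.mem_Icc]
                  refine ⟨⟨?_, ?_⟩, hi⟩
                  · refine Finset.card_pos.2 ⟨i, ?_⟩
                    simp
                  · exact le_trans (Finset.card_filter_le _ _) (by simp)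
                · exact hinj.injOn
      _ = (N : ℝ≥0∞) := by simp
  -- hence (ℓ+1) * μ(E_last) ≤ N
  have hmain : ((ℓ + 1 : ℕ) : ℝ≥0∞) * μ (g ⁻¹' A (Fin.last ℓ)) ≤ (N : ℝ≥0∞) := by
    calc ((ℓ + 1 : ℕ) : ℝ≥0∞) * μ (g ⁻¹' A (Fin.last ℓ))
        = ∑ _i : Fin (ℓ + 1), μ (g ⁻¹' A (Fin.last ℓ)) := by
          simp [Finset.sum_const, mul_comm]
      _ = ∑ i : Fin (ℓ + 1), μ (g ⁻¹' A i) :=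
          Finset.sum_congr rfl fun i _ => (key i).symm
      _ ≤ (N : ℝ≥0∞) := hsum
  -- real bound on N
  have hNreal : (N : ℝ) ≤ α * ((ℓ:ℝ) + 1) + 1 := by
    have hfl : ⌊t⌋₊ ≤ ℓ + 1 := by
      have h1 : ⌊t⌋₊ ≤ ⌊((ℓ:ℝ) + 1)⌋₊ := Nat.floor_le_floor htn
      have h2 : ((ℓ:ℝ) + 1) = ((ℓ + 1 : ℕ) : ℝ) := by push_cast; ring
      rw [h2, Nat.floor_natCast] at h1
      exact h1
    have hNle : N ≤ (ℓ + 1) - ⌊t⌋₊ := by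
      have hsub : ((Finset.Icc 1 (ℓ + 1)).filter (fun k : ℕ => t < (k:ℝ)))
          ⊆ Finset.Icc (⌊t⌋₊ + 1) (ℓ + 1) := by
        intro k hk
        simp only [Finset.mem_filter, Finset.mem_Icc] at hk
        refine Finset.mem_Icc.2 ⟨?_, hk.1.2⟩
        have : ⌊t⌋₊ < k := (Nat.floor_lt ht0).2 hk.2
        omega
      calc N ≤ (Finset.Icc (⌊t⌋₊ + 1) (ℓ + 1)).card := Finset.card_le_card hsub
        _ = (ℓ + 1) - ⌊t⌋₊ := by rw [Nat.card_Icc]; omega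
    have h1 : (N:ℝ) ≤ ((ℓ + 1 : ℕ):ℝ) - (⌊t⌋₊:ℝ) := by
      have := (Nat.cast_le (α := ℝ)).2 hNle
      rwa [Nat.cast_sub hfl] at this
    have h2 : t - 1 ≤ (⌊t⌋₊:ℝ) := by
      have := Nat.lt_floor_add_one t
      linarith
    have h3 : ((ℓ + 1 : ℕ):ℝ) = (ℓ:ℝ) + 1 := by push_cast; ring
    rw [h3] at h1
    rw [htdef] at h2
    nlinarith
  -- identify the event
  have hset : {ω | (((Finset.univ.filter
        (fun i : Fin (ℓ + 1) => s (Fin.last ℓ) ω ≤ s i ω)).card : ℝ) / (ℓ + 1)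
      > 1 - α)} = g ⁻¹' A (Fin.last ℓ) := by
    ext ω
    simp only [Set.mem_setOf_eq, Set.mem_preimage, hAdef, gt_iff_lt]
    rw [lt_div_iff₀ hnpos, htdef]
  rw [hset]
  -- endgame in ℝ≥0∞
  have hdiv : μ (g ⁻¹' A (Fin.last ℓ)) ≤ (N : ℝ≥0∞) / ((ℓ + 1 : ℕ) : ℝ≥0∞) := by
    rw [ENNReal.le_div_iff_mul_le (Or.inl (by simp)) (Or.inl (by simp))]
    rw [mul_comm]
    exact hmain
  refine hdiv.trans ?_
  have hc1 : ((N:ℝ≥0∞)) = ENNReal.ofReal (N:ℝ) := (ENNReal.ofReal_natCast N).symm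
  have hc2 : (((ℓ + 1 : ℕ):ℝ≥0∞)) = ENNReal.ofReal (((ℓ + 1 : ℕ)): ℝ) := (ENNReal.ofReal_natCast _).symm
  rw [hc1, hc2, ← ENNReal.ofReal_div_of_pos (by push_cast; exact hnpos)]
  apply ENNReal.ofReal_le_ofReal
  rw [div_le_iff₀ (by push_cast; exact hnpos)]
  have h3 : ((ℓ + 1 : ℕ):ℝ) = (ℓ:ℝ) + 1 := by push_cast; ring
  rw [h3]
  calc (N:ℝ) ≤ α * ((ℓ:ℝ)+1) + 1 := hNreal
    _ = (α + 1/((ℓ:ℝ)+1)) * ((ℓ:ℝ)+1) := by field_simp
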